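/- Every rational map φ : X → Y between affine varieties in ℂ^ℕ has nonempty domain. Equivalently: if X ⊆ ℂ^ℕ is an affine variety (zero set of an ideal of ℂ[z_1,z_2,...]) with I(X) prime, and (f_i)_{i∈ℕ} is a sequence of regular functions on X none of which is identically zero on X, then there is a point of X at which no f_i vanishes. -/

import Mathlib

open MvPolynomial

/-- The underlying set of the submonoid closure of a countable set is countable. -/
lemma countable_submonoid_closure {M : Type*} [Monoid M] {s : Set M} (hs : s.Countable) :
    (Submonoid.closure s : Set M).Countable := by
  have hsub : (Submonoid.closure s : Set M) ⊆
      Set.range (fun l : List s => (l.map (Subtype.val)).prod) := by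
    intro x hx
    obtain ⟨l, hl, hp⟩ := Submonoid.exists_list_of_mem_closure hx
    refine ⟨l.attach.map fun y => ⟨y.1, hl y.1 y.2⟩, ?_⟩
    show ((l.attach.map fun y => (⟨y.1, hl y.1 y.2⟩ : s)).map Subtype.val).prod = x
    rw [List.map_map]
    have h : l.attach.map (Subtype.val ∘ fun y : {x // x ∈ l} => (⟨y.1, hl y.1 y.2⟩ : s)) = l :=
      (List.attach_map_val (l := l) (f := fun x => x)).trans (List.map_id l)
    rw [h, hp]
  haveI : Countable s := hs.to_subtype
  exact (Set.countable_range _).mono hsub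

set_option maxHeartbeats 2000000 in
set_option synthInstance.maxHeartbeats 400000 in
/-- Every rational map between affine varieties in `ℂ^ℕ` has nonempty domain: if
`X = V(J) ⊆ ℂ^ℕ` with `J` prime (so the coordinate ring `S/J` is a domain) and
`(f_i)_{i ∈ ℕ}` are nonzero elements of the coordinate ring, then there is a point of `X`
at which no `f_i` vanishes (evaluation of a coordinate-ring element at such a point being
given via any polynomial representative). -/
theorem rational_map_dom_nonempty (J : Ideal (MvPolynomial ℕ ℂ)) (hJ : J.IsPrime)
    (f : ℕ → MvPolynomial ℕ ℂ ⧸ J) (hf : ∀ i, f i ≠ 0) :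
    ∃ a : ℕ → ℂ, (∀ g ∈ J, eval a g = 0) ∧
      ∀ i, ∀ g : MvPolynomial ℕ ℂ, Ideal.Quotient.mk J g = f i → eval a g ≠ 0 := by
  classical
  haveI := hJ
  -- the multiplicative set generated by the `f i`
  let Mo : Submonoid (MvPolynomial ℕ ℂ ⧸ J) := Submonoid.closure (Set.range f)
  have hMle : Mo ≤ nonZeroDivisors (MvPolynomial ℕ ℂ ⧸ J) := by
    rw [Submonoid.closure_le]
    rintro x ⟨i, rfl⟩
    exact mem_nonZeroDivisors_of_ne_zero (hf i)
  haveI : IsDomain (Localization Mo) := IsLocalization.isDomain_localization hMle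
  obtain ⟨m, hm⟩ := Ideal.exists_maximal (Localization Mo)
  haveI := hm
  haveI : m.IsTwoSided := ⟨fun b ha => mul_comm b _ ▸ m.smul_mem _ ha⟩
  letI : Field (Localization Mo ⧸ m) := Ideal.Quotient.field (R := Localization Mo) m
  let φ1 : MvPolynomial ℕ ℂ →+* MvPolynomial ℕ ℂ ⧸ J := Ideal.Quotient.mk J
  let φ2 : MvPolynomial ℕ ℂ ⧸ J →+* Localization Mo := algebraMap _ _
  let φ3 : Localization Mo →+* Localization Mo ⧸ m := Ideal.Quotient.mk m
  let ψ : MvPolynomial ℕ ℂ →+* Localization Mo ⧸ m := φ3.comp (φ2.comp φ1)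
  have halg : ∀ c : ℂ, algebraMap ℂ (Localization Mo ⧸ m) c = ψ (C c) := by
    intro c
    rw [IsScalarTower.algebraMap_apply ℂ (Localization Mo) (Localization Mo ⧸ m),
      IsScalarTower.algebraMap_apply ℂ (MvPolynomial ℕ ℂ ⧸ J) (Localization Mo),
      IsScalarTower.algebraMap_apply ℂ (MvPolynomial ℕ ℂ) (MvPolynomial ℕ ℂ ⧸ J)]
    rfl
  -- `ψ` as a `ℂ`-algebra hom
  have hcomm : ∀ c : ℂ, ψ (algebraMap ℂ (MvPolynomial ℕ ℂ) c) =
      algebraMap ℂ (Localization Mo ⧸ m) c := by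
    intro c
    rw [halg, MvPolynomial.algebraMap_eq]
  let ψA : MvPolynomial ℕ ℂ →ₐ[ℂ] Localization Mo ⧸ m := { ψ with commutes' := hcomm }
  -- images of elements of `Mo` are nonzero in the quotient field
  have hfK0 : ∀ s ∈ Mo, φ3 (φ2 s) ≠ 0 := by
    intro s hs
    exact ((IsLocalization.map_units (Localization Mo) ⟨s, hs⟩).map φ3).ne_zero
  -- the generating set
  let G : Set (Localization Mo ⧸ m) :=
    Set.range (fun i => ψ (X i)) ∪ Set.range (fun i => (φ3 (φ2 (f i)))⁻¹)
  have hGc : G.Countable := (Set.countable_range _).union (Set.countable_range _)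
  have hinvmem : ∀ s ∈ Mo, (φ3 (φ2 s))⁻¹ ∈ Algebra.adjoin ℂ G := by
    intro s hs
    induction hs using Submonoid.closure_induction with
    | mem x hx =>
      obtain ⟨i, rfl⟩ := hx
      exact Algebra.subset_adjoin (Or.inr ⟨i, rfl⟩)
    | one => simp only [map_one, inv_one]; exact one_mem _
    | mul x y hx hy ihx ihy =>
      rw [map_mul, map_mul, mul_inv]
      exact mul_mem ihx ihy
  have hrange : ∀ p : MvPolynomial ℕ ℂ, ψ p ∈ Algebra.adjoin ℂ G := by
    intro p
    have h1 : ψA p ∈ Algebra.adjoin ℂ (Set.range fun i => ψ (X i)) := by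
      have h2 : Algebra.adjoin ℂ (Set.range fun i => ψ (X i)) =
          (Algebra.adjoin ℂ (Set.range (X : ℕ → MvPolynomial ℕ ℂ))).map ψA := by
        rw [AlgHom.map_adjoin, ← Set.range_comp]
        rfl
      rw [h2, adjoin_range_X]
      exact ⟨p, trivial, rfl⟩
    exact Algebra.adjoin_mono Set.subset_union_left h1
  have hadj : Algebra.adjoin ℂ G = ⊤ := by
    rw [eq_top_iff]
    intro x _
    obtain ⟨y, rfl⟩ := Ideal.Quotient.mk_surjective (I := m) x
    induction y using Localization.induction_on with
    | H p =>
      obtain ⟨r, s⟩ := p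
      obtain ⟨q, rfl⟩ := Ideal.Quotient.mk_surjective (I := J) r
      have hspec : Localization.mk (φ1 q) s * φ2 (s : MvPolynomial ℕ ℂ ⧸ J) = φ2 (φ1 q) := by
        rw [Localization.mk_eq_mk']
        exact IsLocalization.mk'_spec _ _ _
      have hx : φ3 (Localization.mk (φ1 q) s) = ψ q * (φ3 (φ2 (s : MvPolynomial ℕ ℂ ⧸ J)))⁻¹ := by
        have h4 := congrArg φ3 hspec
        rw [map_mul] at h4
        rw [eq_mul_inv_iff_mul_eq₀ (hfK0 _ s.2)]
        exact h4
      show φ3 (Localization.mk (φ1 q) s) ∈ Algebra.adjoin ℂ G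
      rw [hx]
      exact mul_mem (hrange q) (hinvmem _ s.2)
  -- the quotient field has countable rank over ℂ
  have hrank : Module.rank ℂ (Localization Mo ⧸ m) ≤ Cardinal.aleph0 := by
    have hspan : Submodule.span ℂ
        ((Submonoid.closure G : Submonoid (Localization Mo ⧸ m)) : Set (Localization Mo ⧸ m)) =
          ⊤ := by
      have h := Algebra.adjoin_eq_span (R := ℂ) (A := Localization Mo ⧸ m) G
      rw [hadj] at h
      exact h.symm.trans Algebra.top_toSubmodule
    have h1 : Module.rank ℂ (Localization Mo ⧸ m) = Module.rank ℂ (Submodule.span ℂ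
        ((Submonoid.closure G : Submonoid (Localization Mo ⧸ m)) : Set (Localization Mo ⧸ m))) := by
      rw [hspan, rank_top]
    rw [h1]
    exact (rank_span_le _).trans (Cardinal.mk_le_aleph0_iff.mpr (countable_submonoid_closure hGc))
  -- hence the quotient field is algebraic over ℂ
  haveI : Algebra.IsAlgebraic ℂ (Localization Mo ⧸ m) := by
    refine ⟨fun x => ?_⟩
    by_contra hx
    have h1 := (Transcendental.linearIndependent_sub_inv
      (F := ℂ) (E := Localization Mo ⧸ m) hx).cardinal_le_rank
    have h2 : (Cardinal.mk ℂ) ≤ Cardinal.aleph0 := h1.trans hrank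
    rw [Cardinal.mk_complex] at h2
    exact absurd h2 (not_le.mpr Cardinal.aleph0_lt_continuum)
  have hsurj : Function.Surjective (algebraMap ℂ (Localization Mo ⧸ m)) :=
    IsAlgClosed.algebraMap_bijective_of_isIntegral.2
  have hinj : Function.Injective (algebraMap ℂ (Localization Mo ⧸ m)) :=
    (algebraMap ℂ (Localization Mo ⧸ m)).injective
  let e : ℂ ≃+* Localization Mo ⧸ m :=
    RingEquiv.ofBijective (algebraMap ℂ (Localization Mo ⧸ m)) ⟨hinj, hsurj⟩
  let Φ : MvPolynomial ℕ ℂ →+* ℂ := (e.symm : Localization Mo ⧸ m →+* ℂ).comp ψ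
  have heval : (eval (fun i => Φ (X i)) : MvPolynomial ℕ ℂ →+* ℂ) = Φ := by
    apply MvPolynomial.ringHom_ext
    · intro c
      have h3 : Φ (C c) = e.symm (algebraMap ℂ (Localization Mo ⧸ m) c) := by
        show e.symm (ψ (C c)) = _
        rw [halg]
      have h4 : e.symm (algebraMap ℂ (Localization Mo ⧸ m) c) = c := e.symm_apply_apply c
      rw [eval_C, h3, h4]
    · intro i
      rw [eval_X]
  refine ⟨fun i => Φ (X i), ?_, ?_⟩
  · intro g hg
    have h5 : φ1 g = 0 := Ideal.Quotient.eq_zero_iff_mem.mpr hg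
    have hψg : ψ g = 0 := by
      show φ3 (φ2 (φ1 g)) = 0
      rw [h5, map_zero, map_zero]
    have : eval (fun i => Φ (X i)) g = Φ g := by rw [heval]
    rw [this]
    show e.symm (ψ g) = 0
    rw [hψg, map_zero]
  · intro i g hg hzero
    have : eval (fun i => Φ (X i)) g = Φ g := by rw [heval]
    rw [this] at hzero
    have hψg : ψ g = φ3 (φ2 (f i)) := by
      show φ3 (φ2 (φ1 g)) = φ3 (φ2 (f i))
      rw [hg]
    have hne : ψ g ≠ 0 := by
      rw [hψg]
      exact hfK0 _ (Submonoid.subset_closure ⟨i, rfl⟩)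
    have h6 : e.symm (ψ g) = 0 := hzero
    exact hne (by simpa using e.symm.injective (h6.trans (map_zero e.symm).symm))
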